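/- arXiv:2110.12615 — 3 statements merged into one kernel-verified Lean document; each statement's English description precedes it below -/
import Mathlib

section
/- Let λ > 0 and let x₁,…,x_T ∈ ℝ^d with ‖x_t‖₂ ≤ L for all t. Define Z_t = λI + Σ_{i=1}^t x_i x_iᵀ. Then Σ_{t=1}^T min{1, ‖x_t‖²_{Z_{t-1}^{-1}}} ≤ 2d log((dλ + TL²)/(dλ)), where ‖x‖²_A = xᵀ A x. -/
open Matrix Finset

lemma aux_vecMulVec_posSemidef {d : ℕ} (v : Fin d → ℝ) : (vecMulVec v v).PosSemidef := by
  have h := Matrix.posSemidef_conjTranspose_mul_self (Matrix.replicateRow Unit v)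
  simpa [Matrix.vecMulVec_eq Unit, Matrix.conjTranspose_replicateRow] using h

lemma aux_smul_one_posDef {d : ℕ} {lam : ℝ} (hlam : 0 < lam) :
    (lam • (1 : Matrix (Fin d) (Fin d) ℝ)).PosDef := by
  rw [Matrix.smul_one_eq_diagonal]
  exact Matrix.posDef_diagonal_iff.mpr fun _ => hlam

lemma aux_trace_eq_sum_eigenvalues {n : Type*} [Fintype n] [DecidableEq n]
    {A : Matrix n n ℝ} (hA : A.IsHermitian) :
    A.trace = ∑ i, hA.eigenvalues i := by
  nth_rewrite 1 [hA.spectral_theorem]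
  rw [Unitary.conjStarAlgAut_apply, Matrix.trace_mul_cycle,
    Matrix.mem_unitaryGroup_iff'.mp (hA.eigenvectorUnitary).2, one_mul, Matrix.trace_diagonal]
  simp

lemma aux_det_le_pow {n : Type*} [Fintype n] [DecidableEq n] [Nonempty n]
    {A : Matrix n n ℝ} (hA : A.PosDef) :
    A.det ≤ (A.trace / Fintype.card n) ^ (Fintype.card n) := by
  set c := Fintype.card n with hc
  have hc0 : 0 < c := Fintype.card_pos
  have hcR : (0:ℝ) < c := by exact_mod_cast hc0
  have heig : ∀ i, 0 ≤ hA.isHermitian.eigenvalues i := fun i => (hA.eigenvalues_pos i).le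
  have hgm := Real.geom_mean_le_arith_mean_weighted Finset.univ
      (fun _ => (c:ℝ)⁻¹) hA.isHermitian.eigenvalues
      (fun _ _ => by positivity)
      (by rw [Finset.sum_const, Finset.card_univ, nsmul_eq_mul, ← hc, mul_inv_cancel₀ (ne_of_gt hcR)])
      (fun i _ => heig i)
  have hsum : ∑ i, (c:ℝ)⁻¹ * hA.isHermitian.eigenvalues i = A.trace / c := by
    rw [aux_trace_eq_sum_eigenvalues hA.isHermitian, ← Finset.mul_sum, div_eq_inv_mul]
  rw [hsum] at hgm
  have hdet : A.det = ∏ i, hA.isHermitian.eigenvalues i := by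
    simpa using hA.isHermitian.det_eq_prod_eigenvalues
  have hprod : A.det = (∏ i, hA.isHermitian.eigenvalues i ^ ((c:ℝ)⁻¹)) ^ c := by
    rw [← Finset.prod_pow, hdet]
    refine Finset.prod_congr rfl fun i _ => ?_
    rw [← Real.rpow_natCast (hA.isHermitian.eigenvalues i ^ ((c:ℝ)⁻¹)) c,
      ← Real.rpow_mul (heig i), inv_mul_cancel₀ (ne_of_gt hcR), Real.rpow_one]
  rw [hprod]
  exact pow_le_pow_left₀ (Finset.prod_nonneg fun i _ => Real.rpow_nonneg (heig i) _) hgm c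

lemma aux_min_le_two_log {u : ℝ} (hu : 0 ≤ u) : min 1 u ≤ 2 * Real.log (1 + u) := by
  rcases le_total u 1 with h | h
  · rw [min_eq_right h]
    have h3 : 1 - u/2 ≤ Real.exp (-(u/2)) := by
      have := Real.add_one_le_exp (-(u/2)); linarith
    have h5 : (1 - u/2) * Real.exp (u/2) ≤ 1 := by
      have := mul_le_mul_of_nonneg_right h3 (Real.exp_pos (u/2)).le
      rwa [← Real.exp_add, neg_add_cancel, Real.exp_zero] at this
    have h2 : Real.exp (u/2) ≤ 1 + u := by
      nlinarith [Real.exp_pos (u/2), sq_nonneg u]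
    have h6 : u/2 ≤ Real.log (1 + u) := by
      rw [Real.le_log_iff_exp_le (by linarith)]
      exact h2
    linarith
  · rw [min_eq_left h]
    have h1 : Real.log 2 ≤ Real.log (1 + u) :=
      Real.log_le_log (by norm_num) (by linarith)
    have := Real.log_two_gt_d9
    linarith

lemma aux_det_succ {d : ℕ} {A : Matrix (Fin d) (Fin d) ℝ} (hA : A.PosDef) (v : Fin d → ℝ) :
    (A + vecMulVec v v).det = A.det * (1 + v ⬝ᵥ A⁻¹ *ᵥ v) := by
  have hdet : IsUnit A.det := isUnit_iff_ne_zero.mpr (ne_of_gt hA.det_pos)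
  rw [Matrix.vecMulVec_eq Unit, Matrix.det_add_replicateCol_mul_replicateRow hdet]
  congr 1
  rw [Matrix.det_unique, Matrix.add_apply, Matrix.one_apply_eq, ← Matrix.replicateRow_vecMul,
    Matrix.replicateRow_mul_replicateCol_apply, ← dotProduct_mulVec]

theorem stmt0 (d T : ℕ) (lam L : ℝ) (hlam : 0 < lam)
    (x : ℕ → Fin d → ℝ) (hL : ∀ t, Real.sqrt (x t ⬝ᵥ x t) ≤ L) :
    ∑ t ∈ Finset.range T,
      min 1 (x t ⬝ᵥ (((lam • (1 : Matrix (Fin d) (Fin d) ℝ) +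
        ∑ i ∈ Finset.range t, vecMulVec (x i) (x i))⁻¹) *ᵥ x t))
      ≤ 2 * d * Real.log ((d * lam + T * L ^ 2) / (d * lam)) := by
  rcases Nat.eq_zero_or_pos d with hd | hd
  · subst hd
    simp [dotProduct]
  haveI : Nonempty (Fin d) := Fin.pos_iff_nonempty.mp hd
  have hdR : (0:ℝ) < d := by exact_mod_cast hd
  set Z : ℕ → Matrix (Fin d) (Fin d) ℝ :=
    fun t => lam • 1 + ∑ i ∈ Finset.range t, vecMulVec (x i) (x i) with hZdef
  have hS : ∀ t, (∑ i ∈ Finset.range t, vecMulVec (x i) (x i)).PosSemidef := by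
    intro t
    induction t with
    | zero => simpa using Matrix.PosSemidef.zero
    | succ n ih => rw [Finset.sum_range_succ]; exact ih.add (aux_vecMulVec_posSemidef _)
  have hZ : ∀ t, (Z t).PosDef := fun t => (aux_smul_one_posDef hlam).add_posSemidef (hS t)
  set u : ℕ → ℝ := fun t => x t ⬝ᵥ (Z t)⁻¹ *ᵥ x t with hudef
  have hu : ∀ t, 0 ≤ u t := by
    intro t
    have := ((hZ t).inv.posSemidef).dotProduct_mulVec_nonneg (x t)
    simpa using this
  have hZsucc : ∀ t, Z (t+1) = Z t + vecMulVec (x t) (x t) := by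
    intro t
    simp only [hZdef, Finset.sum_range_succ, add_assoc]
  have hdetsucc : ∀ t, (Z (t+1)).det = (Z t).det * (1 + u t) := by
    intro t
    rw [hZsucc t, aux_det_succ (hZ t)]
  have hprod : ∀ t, (Z t).det = lam ^ d * ∏ i ∈ Finset.range t, (1 + u i) := by
    intro t
    induction t with
    | zero =>
      simp only [hZdef, Finset.range_zero, Finset.sum_empty, Finset.prod_empty, add_zero, mul_one]
      rw [Matrix.det_smul, Matrix.det_one, mul_one, Fintype.card_fin]
    | succ n ih =>
      rw [hdetsucc n, ih, Finset.prod_range_succ, mul_assoc]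
  have hL0 : 0 ≤ L := le_trans (Real.sqrt_nonneg _) (hL 0)
  have hL2 : ∀ t, x t ⬝ᵥ x t ≤ L ^ 2 := by
    intro t
    have hnn : 0 ≤ x t ⬝ᵥ x t := Finset.sum_nonneg fun i _ => mul_self_nonneg _
    calc x t ⬝ᵥ x t = Real.sqrt (x t ⬝ᵥ x t) ^ 2 := (Real.sq_sqrt hnn).symm
      _ ≤ L ^ 2 := pow_le_pow_left₀ (Real.sqrt_nonneg _) (hL t) 2
  have htrvv : ∀ t, (vecMulVec (x t) (x t)).trace = x t ⬝ᵥ x t := by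
    intro t
    simp [Matrix.trace, Matrix.diag, Matrix.vecMulVec_apply, dotProduct]
  have htrace : (Z T).trace = d * lam + ∑ t ∈ Finset.range T, x t ⬝ᵥ x t := by
    rw [hZdef]
    rw [Matrix.trace_add, Matrix.trace_smul, Matrix.trace_one, Matrix.trace_sum]
    simp only [htrvv, Fintype.card_fin, smul_eq_mul, mul_comm]
  have htrle : (Z T).trace ≤ d * lam + T * L ^ 2 := by
    rw [htrace]
    have : ∑ t ∈ Finset.range T, x t ⬝ᵥ x t ≤ ∑ t ∈ Finset.range T, L ^ 2 :=
      Finset.sum_le_sum fun t _ => hL2 t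
    simp only [Finset.sum_const, Finset.card_range, nsmul_eq_mul] at this
    linarith
  have hApos : (0:ℝ) < d * lam + T * L ^ 2 := by positivity
  have hdetle : (Z T).det ≤ ((d * lam + T * L ^ 2) / d) ^ d := by
    refine le_trans ?_ (pow_le_pow_left₀ ?_ (div_le_div_of_nonneg_right htrle hdR.le) d)
    · have := aux_det_le_pow (hZ T)
      simpa [Fintype.card_fin] using this
    · have htrpos : (0:ℝ) < (Z T).trace := by
        rw [htrace]
        have : (0:ℝ) ≤ ∑ t ∈ Finset.range T, x t ⬝ᵥ x t :=
          Finset.sum_nonneg fun t _ => Finset.sum_nonneg fun i _ => mul_self_nonneg _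
        nlinarith
      positivity
  -- main chain
  have h1 : ∑ t ∈ Finset.range T, min 1 (u t) ≤ 2 * ∑ t ∈ Finset.range T, Real.log (1 + u t) := by
    rw [Finset.mul_sum]
    exact Finset.sum_le_sum fun t _ => aux_min_le_two_log (hu t)
  have hpos1 : ∀ t, (0:ℝ) < 1 + u t := fun t => by have := hu t; linarith
  have h2 : ∑ t ∈ Finset.range T, Real.log (1 + u t)
      = Real.log (∏ t ∈ Finset.range T, (1 + u t)) := by
    rw [Real.log_prod fun t _ => (hpos1 t).ne']
  have hprodpos : (0:ℝ) < ∏ t ∈ Finset.range T, (1 + u t) :=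
    Finset.prod_pos fun t _ => hpos1 t
  have h3 : ∏ t ∈ Finset.range T, (1 + u t) = (Z T).det / lam ^ d := by
    rw [hprod T]; field_simp
  have h4 : Real.log (∏ t ∈ Finset.range T, (1 + u t))
      = Real.log ((Z T).det) - d * Real.log lam := by
    rw [h3, Real.log_div (ne_of_gt (hZ T).det_pos) (by positivity), Real.log_pow]
  have h5 : Real.log ((Z T).det) ≤ d * Real.log ((d * lam + T * L ^ 2) / d) := by
    calc Real.log ((Z T).det) ≤ Real.log (((d * lam + T * L ^ 2) / d) ^ d) :=
          Real.log_le_log (hZ T).det_pos hdetle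
      _ = d * Real.log ((d * lam + T * L ^ 2) / d) := by rw [Real.log_pow]
  have h6 : Real.log ((d * lam + T * L ^ 2) / d) - Real.log lam
      = Real.log ((d * lam + T * L ^ 2) / (d * lam)) := by
    rw [Real.log_div (ne_of_gt hApos) (ne_of_gt hdR),
      Real.log_div (ne_of_gt hApos) (by positivity),
      Real.log_mul (ne_of_gt hdR) (ne_of_gt hlam)]
    ring
  calc ∑ t ∈ Finset.range T, min 1 (u t)
      ≤ 2 * ∑ t ∈ Finset.range T, Real.log (1 + u t) := h1
    _ = 2 * (Real.log ((Z T).det) - d * Real.log lam) := by rw [h2, h4]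
    _ ≤ 2 * (d * Real.log ((d * lam + T * L ^ 2) / d) - d * Real.log lam) := by
        have := h5; linarith
    _ = 2 * d * (Real.log ((d * lam + T * L ^ 2) / d) - Real.log lam) := by ring
    _ = 2 * d * Real.log ((d * lam + T * L ^ 2) / (d * lam)) := by rw [h6]
end

section
/- Let λ > 0, x₁,…,x_t ∈ ℝ^d, Z_t = λI + Σ_{i=1}^t x_i x_iᵀ, and let y_i, y_i^s ∈ ℝ with Σ_{i=1}^t |y_i − y_i^s| = C(t). Define b_t = Σ y_i x_i, b_t^s = Σ y_i^s x_i, μ_t = Z_t^{-1} b_t, μ_t^s = Z_t^{-1} b_t^s. Then ‖μ_t − μ_t^s‖_{Z_t} ≤ C(t). -/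
open Matrix Finset

private lemma vmv_mulVec (d : ℕ) (a v : Fin d → ℝ) :
    vecMulVec a a *ᵥ v = (a ⬝ᵥ v) • a := by
  ext j
  simp [mulVec, vecMulVec_apply, dotProduct, Finset.mul_sum, mul_comm, mul_left_comm]

private lemma sum_mulVec' {d t : ℕ} (M : ℕ → Matrix (Fin d) (Fin d) ℝ) (v : Fin d → ℝ) :
    (∑ i ∈ Finset.range t, M i) *ᵥ v = ∑ i ∈ Finset.range t, M i *ᵥ v := by
  ext j
  simp [mulVec, dotProduct, Matrix.sum_apply, Finset.sum_mul]
  rw [Finset.sum_comm]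

private lemma dotProduct_sum' {d t : ℕ} (v : Fin d → ℝ) (f : ℕ → Fin d → ℝ) :
    v ⬝ᵥ ∑ i ∈ Finset.range t, f i = ∑ i ∈ Finset.range t, v ⬝ᵥ f i := by
  simp only [dotProduct, Finset.sum_apply, Finset.mul_sum]
  rw [Finset.sum_comm]

private lemma dps_nonneg {d : ℕ} (v : Fin d → ℝ) : 0 ≤ v ⬝ᵥ v :=
  Finset.sum_nonneg fun i _ => mul_self_nonneg _

private lemma eu_norm (d : ℕ) (u : Fin d → ℝ) :
    ‖(EuclideanSpace.equiv (Fin d) ℝ).symm u‖ = Real.sqrt (u ⬝ᵥ u) := by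
  rw [EuclideanSpace.norm_eq]
  simp [dotProduct, sq]

theorem stmt2 (d t : ℕ) (lam : ℝ) (hlam : 0 < lam) (x : ℕ → Fin d → ℝ)
    (y ys : ℕ → ℝ) (Ct : ℝ)
    (hC : ∑ i ∈ Finset.range t, |y i - ys i| = Ct)
    (Z : Matrix (Fin d) (Fin d) ℝ)
    (hZ : Z = lam • (1 : Matrix (Fin d) (Fin d) ℝ) +
        ∑ i ∈ Finset.range t, vecMulVec (x i) (x i))
    (b bs mu mus : Fin d → ℝ)
    (hb : b = ∑ i ∈ Finset.range t, y i • x i)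
    (hbs : bs = ∑ i ∈ Finset.range t, ys i • x i)
    (hmu : mu = Z⁻¹ *ᵥ b) (hmus : mus = Z⁻¹ *ᵥ bs) :
    Real.sqrt ((mu - mus) ⬝ᵥ (Z *ᵥ (mu - mus))) ≤ Ct := by
  -- quadratic form of Z
  have quad : ∀ v : Fin d → ℝ,
      v ⬝ᵥ Z *ᵥ v = lam * (v ⬝ᵥ v) + ∑ i ∈ Finset.range t, (x i ⬝ᵥ v) ^ 2 := by
    intro v
    rw [hZ, add_mulVec, smul_mulVec, one_mulVec, dotProduct_add, dotProduct_smul,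
      sum_mulVec']
    congr 1
    rw [dotProduct_sum']
    refine Finset.sum_congr rfl fun i _ => ?_
    rw [vmv_mulVec, dotProduct_smul, smul_eq_mul, dotProduct_comm, sq]
  -- Z is positive definite
  have hZpd : Z.PosDef := by
    refine Matrix.PosDef.of_dotProduct_mulVec_pos ?_ ?_
    · show Zᴴ = Z
      ext j k
      rw [conjTranspose_apply, star_trivial, hZ]
      simp only [Matrix.add_apply, Matrix.smul_apply, Matrix.sum_apply, vecMulVec_apply,
        Matrix.one_apply]
      have h1 : (if k = j then (1:ℝ) else 0) = (if j = k then 1 else 0) := by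
        simp [eq_comm]
      rw [h1]
      congr 1
      exact Finset.sum_congr rfl fun i _ => mul_comm _ _
    · intro v hv
      have h1 : (0:ℝ) < v ⬝ᵥ v := by
        rcases (dps_nonneg v).lt_or_eq with h | h
        · exact h
        · exact absurd ((dotProduct_self_eq_zero).mp h.symm) hv
      have h2 : (0:ℝ) ≤ ∑ i ∈ Finset.range t, (x i ⬝ᵥ v) ^ 2 :=
        Finset.sum_nonneg fun i _ => sq_nonneg _
      have := quad v
      simp only [star_trivial]
      nlinarith
  have hunit : IsUnit Z.det := hZpd.isUnit.map detMonoidHom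
  have hZZinv : Z * Z⁻¹ = 1 := Matrix.mul_nonsing_inv Z hunit
  -- the inverse and its square root
  have hApd : (Z⁻¹).PosDef := hZpd.inv
  have hApsd : (Z⁻¹).PosSemidef := hApd.posSemidef
  obtain ⟨B, hBsym, hBB⟩ : ∃ B : Matrix (Fin d) (Fin d) ℝ, Bᵀ = B ∧ B * B = Z⁻¹ := by
    open scoped MatrixOrder in
    exact ⟨CFC.sqrt Z⁻¹, (CFC.sqrt_nonneg Z⁻¹).posSemidef.isHermitian,
      CFC.sqrt_mul_sqrt_self Z⁻¹ hApsd.nonneg⟩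
  -- key factorization
  have keyfact : ∀ w : Fin d → ℝ, w ⬝ᵥ Z⁻¹ *ᵥ w = (B *ᵥ w) ⬝ᵥ (B *ᵥ w) := by
    intro w
    rw [← hBB, ← mulVec_mulVec, dotProduct_mulVec, ← mulVec_transpose, hBsym]
  -- bound on each x i
  have hxb : ∀ i ∈ Finset.range t, x i ⬝ᵥ Z⁻¹ *ᵥ x i ≤ 1 := by
    intro i hi
    set u := Z⁻¹ *ᵥ x i with hu
    have hZu : Z *ᵥ u = x i := by
      rw [hu, mulVec_mulVec, hZZinv, one_mulVec]
    have hs_eq : x i ⬝ᵥ u = u ⬝ᵥ Z *ᵥ u := by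
      rw [hZu, dotProduct_comm]
    have hq := quad u
    have h3 : (x i ⬝ᵥ u) ^ 2 ≤ ∑ j ∈ Finset.range t, (x j ⬝ᵥ u) ^ 2 :=
      Finset.single_le_sum (f := fun j => (x j ⬝ᵥ u) ^ 2) (fun j _ => sq_nonneg _) hi
    have h4 : (0:ℝ) ≤ u ⬝ᵥ u := dps_nonneg u
    nlinarith [hs_eq, hq, h3, h4, hlam]
  -- rewrite the goal
  have hΔ : mu - mus = Z⁻¹ *ᵥ (b - bs) := by rw [hmu, hmus, mulVec_sub]
  have hZmul : Z *ᵥ (mu - mus) = b - bs := by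
    rw [hΔ, mulVec_mulVec, hZZinv, one_mulVec]
  have hgoal : (mu - mus) ⬝ᵥ (Z *ᵥ (mu - mus)) = (b - bs) ⬝ᵥ Z⁻¹ *ᵥ (b - bs) := by
    rw [hZmul, hΔ, dotProduct_comm]
  rw [hgoal, keyfact]
  set L := (EuclideanSpace.equiv (Fin d) ℝ).symm with hL
  rw [← eu_norm]
  have hbbs : b - bs = ∑ i ∈ Finset.range t, (y i - ys i) • x i := by
    rw [hb, hbs, ← Finset.sum_sub_distrib]
    exact Finset.sum_congr rfl fun i _ => (sub_smul _ _ _).symm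
  have hBsum : B *ᵥ (b - bs) = ∑ i ∈ Finset.range t, (y i - ys i) • (B *ᵥ x i) := by
    rw [hbbs]
    rw [show ∀ v, B *ᵥ v = B.mulVecLin v from fun _ => rfl]
    rw [map_sum]
    exact Finset.sum_congr rfl fun i _ => by rw [_root_.map_smul]; rfl
  have hLsum : L (B *ᵥ (b - bs)) = ∑ i ∈ Finset.range t, (y i - ys i) • L (B *ᵥ x i) := by
    rw [hBsum, map_sum]
    exact Finset.sum_congr rfl fun i _ => by rw [_root_.map_smul]
  calc ‖L (B *ᵥ (b - bs))‖
      = ‖∑ i ∈ Finset.range t, (y i - ys i) • L (B *ᵥ x i)‖ := by rw [hLsum]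
    _ ≤ ∑ i ∈ Finset.range t, ‖(y i - ys i) • L (B *ᵥ x i)‖ := norm_sum_le _ _
    _ ≤ ∑ i ∈ Finset.range t, |y i - ys i| := by
        refine Finset.sum_le_sum fun i hi => ?_
        rw [norm_smul, Real.norm_eq_abs]
        have h1 : ‖L (B *ᵥ x i)‖ ≤ 1 := by
          rw [hL, eu_norm, ← keyfact]
          exact Real.sqrt_le_one.mpr (hxb i hi)
        calc |y i - ys i| * ‖L (B *ᵥ x i)‖ ≤ |y i - ys i| * 1 :=
              mul_le_mul_of_nonneg_left h1 (abs_nonneg _)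
          _ = |y i - ys i| := mul_one _
    _ = Ct := hC
end

section
/- Let Z be a d×d positive definite matrix, μ̂ ∈ ℝ^d, β > 0, and C = {μ : ‖μ − μ̂‖_Z ≤ β}. Suppose μ* ∈ C. Let D ⊆ ℝ^d be nonempty and finite, and let a ∈ D, ν ∈ C maximize ⟨a', μ'⟩ over (a', μ') ∈ D × C. Then for every a* ∈ D, ⟨a*, μ*⟩ − ⟨a, μ*⟩ ≤ 2β‖a‖_{Z^{-1}}. -/
open Matrix

private lemma dot_cs {d : ℕ} (x y : Fin d → ℝ) :
    x ⬝ᵥ y ≤ Real.sqrt (x ⬝ᵥ x) * Real.sqrt (y ⬝ᵥ y) := by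
  have h := real_inner_le_norm ((WithLp.equiv 2 (Fin d → ℝ)).symm x)
    ((WithLp.equiv 2 (Fin d → ℝ)).symm y)
  simpa [PiLp.inner_apply, RCLike.inner_apply, EuclideanSpace.norm_eq,
    Real.norm_eq_abs, sq_abs, dotProduct, pow_two, mul_comm] using h

private lemma dot_tri {d : ℕ} (x y : Fin d → ℝ) :
    Real.sqrt ((x + y) ⬝ᵥ (x + y)) ≤ Real.sqrt (x ⬝ᵥ x) + Real.sqrt (y ⬝ᵥ y) := by
  have h := norm_add_le ((WithLp.equiv 2 (Fin d → ℝ)).symm x)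
    ((WithLp.equiv 2 (Fin d → ℝ)).symm y)
  simpa [EuclideanSpace.norm_eq, Real.norm_eq_abs, sq_abs, dotProduct, pow_two] using h

theorem stmt5 (d : ℕ) (Z : Matrix (Fin d) (Fin d) ℝ) (hZ : Z.PosDef)
    (muhat mustar : Fin d → ℝ) (beta : ℝ) (hbeta : 0 < beta)
    (Conf : Set (Fin d → ℝ))
    (hConf : Conf = {mu | Real.sqrt ((mu - muhat) ⬝ᵥ (Z *ᵥ (mu - muhat))) ≤ beta})
    (hstar : mustar ∈ Conf)
    (D : Finset (Fin d → ℝ)) (hD : D.Nonempty)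
    (a nu : Fin d → ℝ) (ha : a ∈ D) (hnu : nu ∈ Conf)
    (hmax : ∀ a' ∈ D, ∀ mu' ∈ Conf, a' ⬝ᵥ mu' ≤ a ⬝ᵥ nu) :
    ∀ astar ∈ D, astar ⬝ᵥ mustar - a ⬝ᵥ mustar ≤
      2 * beta * Real.sqrt (a ⬝ᵥ (Z⁻¹ *ᵥ a)) := by
  intro astar hastar
  open MatrixOrder in set S := CFC.sqrt Z with hSdef
  have hSS : S * S = Z := open MatrixOrder in
    CFC.sqrt_mul_sqrt_self Z (Matrix.nonneg_iff_posSemidef.mpr hZ.posSemidef)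
  have hSherm : S.IsHermitian := open MatrixOrder in
    (Matrix.nonneg_iff_posSemidef.mp (CFC.sqrt_nonneg Z)).1
  have hSsym : Sᵀ = S := by
    simpa [Matrix.IsHermitian, Matrix.conjTranspose_eq_transpose_of_trivial] using hSherm
  have hSunit : IsUnit S := by
    rw [Matrix.isUnit_iff_isUnit_det]
    have hdet : S.det * S.det = Z.det := by rw [← Matrix.det_mul, hSS]
    have : S.det ≠ 0 := by
      intro h
      have := hZ.det_pos
      rw [← hdet, h, mul_zero] at this
      exact lt_irrefl _ this
    exact isUnit_iff_ne_zero.mpr this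
  have hSinv : S⁻¹ * S = 1 := Matrix.nonsing_inv_mul S (Matrix.isUnit_iff_isUnit_det S |>.mp hSunit)
  have hSinvT : (S⁻¹)ᵀ = S⁻¹ := by rw [Matrix.transpose_nonsing_inv, hSsym]
  -- key rewrite: v ⬝ᵥ (M *ᵥ w) with symmetric matrices
  have key : ∀ (M : Matrix (Fin d) (Fin d) ℝ) (x y : Fin d → ℝ), Mᵀ = M →
      (M *ᵥ x) ⬝ᵥ y = x ⬝ᵥ (M *ᵥ y) := by
    intro M x y hM
    rw [Matrix.dotProduct_mulVec, ← Matrix.mulVec_transpose, hM]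
  have hZinv : Z⁻¹ = S⁻¹ * S⁻¹ := by rw [← hSS, Matrix.mul_inv_rev]
  -- step 1: optimality
  have h1 : astar ⬝ᵥ mustar ≤ a ⬝ᵥ nu := hmax astar hastar mustar hstar
  -- a ⬝ᵥ (nu - mustar) = (S⁻¹ *ᵥ a) ⬝ᵥ (S *ᵥ (nu - mustar))
  set u := nu - mustar with hu
  have h2 : (S⁻¹ *ᵥ a) ⬝ᵥ (S *ᵥ u) = a ⬝ᵥ u := by
    rw [key S⁻¹ a (S *ᵥ u) hSinvT, Matrix.mulVec_mulVec, hSinv, Matrix.one_mulVec]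
  have h3 : (S⁻¹ *ᵥ a) ⬝ᵥ (S⁻¹ *ᵥ a) = a ⬝ᵥ (Z⁻¹ *ᵥ a) := by
    rw [key S⁻¹ a (S⁻¹ *ᵥ a) hSinvT, Matrix.mulVec_mulVec, ← hZinv]
  have h4 : ∀ v : Fin d → ℝ, (S *ᵥ v) ⬝ᵥ (S *ᵥ v) = v ⬝ᵥ (Z *ᵥ v) := by
    intro v
    rw [key S v (S *ᵥ v) hSsym, Matrix.mulVec_mulVec, hSS]
  -- bound on ‖S u‖
  have hnu' : Real.sqrt ((nu - muhat) ⬝ᵥ (Z *ᵥ (nu - muhat))) ≤ beta := by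
    rw [hConf] at hnu; exact hnu
  have hstar' : Real.sqrt ((mustar - muhat) ⬝ᵥ (Z *ᵥ (mustar - muhat))) ≤ beta := by
    rw [hConf] at hstar; exact hstar
  have hsplit : S *ᵥ u = S *ᵥ (nu - muhat) + S *ᵥ (muhat - mustar) := by
    rw [← Matrix.mulVec_add]
    congr 1
    rw [hu]; abel
  have hneg : S *ᵥ (muhat - mustar) = -(S *ᵥ (mustar - muhat)) := by
    rw [← Matrix.mulVec_neg]; congr 1; abel
  have htri : Real.sqrt ((S *ᵥ u) ⬝ᵥ (S *ᵥ u)) ≤ 2 * beta := by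
    calc Real.sqrt ((S *ᵥ u) ⬝ᵥ (S *ᵥ u))
        ≤ Real.sqrt ((S *ᵥ (nu - muhat)) ⬝ᵥ (S *ᵥ (nu - muhat)))
          + Real.sqrt ((S *ᵥ (muhat - mustar)) ⬝ᵥ (S *ᵥ (muhat - mustar))) := by
          rw [hsplit]; exact dot_tri _ _
      _ ≤ beta + beta := by
          apply add_le_add
          · rw [h4]; exact hnu'
          · rw [hneg, neg_dotProduct, dotProduct_neg, neg_neg, h4]
            exact hstar'
      _ = 2 * beta := by ring
  -- combine
  have h5 : a ⬝ᵥ u ≤ Real.sqrt (a ⬝ᵥ (Z⁻¹ *ᵥ a)) * Real.sqrt ((S *ᵥ u) ⬝ᵥ (S *ᵥ u)) := by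
    rw [← h2, ← h3]
    exact dot_cs _ _
  have h6 : a ⬝ᵥ u ≤ Real.sqrt (a ⬝ᵥ (Z⁻¹ *ᵥ a)) * (2 * beta) :=
    h5.trans (mul_le_mul_of_nonneg_left htri (Real.sqrt_nonneg _))
  have h7 : a ⬝ᵥ u = a ⬝ᵥ nu - a ⬝ᵥ mustar := by
    rw [hu, dotProduct_sub]
  linarith
end
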